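/- Let σ > 0, α > 0, and 0 < λ ≤ α/(2πσ²). Then ∫_{ℝ²} max(0, −(1/α)·(ln(2πσ²λ/α) + |x|²/(2σ²))) dx = (πσ²/α)·(ln(2πσ²λ/α))². -/

import Mathlib

open MeasureTheory intervalIntegral

/-- (Example 2, computation of `Q(λ)`.) For the circular normal target
density with parameter `σ` on `ℝ²` and homogeneous exponential detection with rate `α`,
for `0 < λ ≤ α/(2πσ²)`,
`∫_{ℝ²} max(0, −(1/α)(ln(2πσ²λ/α) + |x|²/(2σ²))) dx = (πσ²/α)·(ln(2πσ²λ/α))²`. -/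
theorem circular_normal_Q
    (σ α lam : ℝ) (hσ : 0 < σ) (hα : 0 < α)
    (hlam0 : 0 < lam) (hlam : lam ≤ α / (2 * Real.pi * σ ^ 2)) :
    ∫ x : EuclideanSpace ℝ (Fin 2),
        max 0 (-(1 / α) *
          (Real.log (2 * Real.pi * σ ^ 2 * lam / α) + ‖x‖ ^ 2 / (2 * σ ^ 2))) =
      Real.pi * σ ^ 2 / α * (Real.log (2 * Real.pi * σ ^ 2 * lam / α)) ^ 2 := by
  have hπ := Real.pi_pos
  set c := Real.log (2 * Real.pi * σ ^ 2 * lam / α) with hc_def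
  have harg_pos : 0 < 2 * Real.pi * σ ^ 2 * lam / α := by positivity
  have harg_le : 2 * Real.pi * σ ^ 2 * lam / α ≤ 1 := by
    rw [div_le_one hα]
    rw [le_div_iff₀ (by positivity)] at hlam
    linarith
  have hc : c ≤ 0 := Real.log_nonpos harg_pos.le harg_le
  set R := Real.sqrt (-(2 * σ ^ 2 * c)) with hR_def
  have hRsq : R ^ 2 = -(2 * σ ^ 2 * c) := Real.sq_sqrt (by nlinarith)
  have hR0 : 0 ≤ R := Real.sqrt_nonneg _
  have key := MeasureTheory.integral_fun_norm_addHaar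
    (volume : Measure (EuclideanSpace ℝ (Fin 2)))
    (fun r : ℝ => max 0 (-(1 / α) * (c + r ^ 2 / (2 * σ ^ 2))))
  rw [key]
  have hdim : Module.finrank ℝ (EuclideanSpace ℝ (Fin 2)) = 2 := by
    simp [finrank_euclideanSpace]
  rw [hdim]
  have hball : (volume (Metric.ball (0 : EuclideanSpace ℝ (Fin 2)) 1)).toReal = Real.pi := by
    rw [EuclideanSpace.volume_ball]
    simp only [Fintype.card_fin]
    rw [show ((2 : ℕ) : ℝ) / 2 + 1 = 2 by norm_num, Real.Gamma_two]
    rw [Real.sq_sqrt hπ.le]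
    simp [ENNReal.toReal_ofReal hπ.le]
  rw [measureReal_def, hball]
  -- compute the 1D integral
  have hI : (∫ y in Set.Ioi (0 : ℝ), y ^ (2 - 1) •
      max 0 (-(1 / α) * (c + y ^ 2 / (2 * σ ^ 2)))) = σ ^ 2 * c ^ 2 / (2 * α) := by
    have hcong : ∀ y ∈ Set.Ioi (0 : ℝ), y ^ (2 - 1) •
        max 0 (-(1 / α) * (c + y ^ 2 / (2 * σ ^ 2))) =
        Set.indicator (Set.Ioc 0 R)
          (fun y => y * (-(1 / α) * (c + y ^ 2 / (2 * σ ^ 2)))) y := by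
      intro y hy
      simp only [show (2 : ℕ) - 1 = 1 from rfl, pow_one, smul_eq_mul]
      rcases le_or_gt y R with h | h
      · rw [Set.indicator_of_mem (Set.mem_Ioc.mpr ⟨hy, h⟩)]
        have hy2 : y ^ 2 ≤ R ^ 2 := by nlinarith [Set.mem_Ioi.mp hy]
        have hle : c + y ^ 2 / (2 * σ ^ 2) ≤ 0 := by
          have : y ^ 2 / (2 * σ ^ 2) ≤ -c := by
            rw [div_le_iff₀ (by positivity)]
            nlinarith [hRsq]
          linarith
        rw [max_eq_right]
        nlinarith [mul_nonneg (le_of_lt (one_div_pos.mpr hα)) (neg_nonneg.mpr hle)]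
      · rw [Set.indicator_of_notMem (by simp [Set.mem_Ioc, not_le.mpr h])]
        have hy2 : R ^ 2 ≤ y ^ 2 := by nlinarith [hR0]
        have hge : 0 ≤ c + y ^ 2 / (2 * σ ^ 2) := by
          have : -c ≤ y ^ 2 / (2 * σ ^ 2) := by
            rw [le_div_iff₀ (by positivity)]
            nlinarith [hRsq]
          linarith
        rw [max_eq_left]
        · ring
        · nlinarith [mul_nonneg (le_of_lt (one_div_pos.mpr hα)) hge]
    rw [setIntegral_congr_fun measurableSet_Ioi hcong,
      setIntegral_indicator measurableSet_Ioc]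
    have hset : Set.Ioi (0 : ℝ) ∩ Set.Ioc 0 R = Set.Ioc 0 R := by
      ext y
      simp only [Set.mem_inter_iff, Set.mem_Ioi, Set.mem_Ioc, and_iff_right_iff_imp]
      exact fun h => h.1
    rw [hset, ← intervalIntegral.integral_of_le hR0]
    have hfun : ∀ y : ℝ, y * (-(1 / α) * (c + y ^ 2 / (2 * σ ^ 2))) =
        (-(c / α)) * y ^ 1 + (-(1 / (2 * σ ^ 2 * α))) * y ^ 3 := by
      intro y; field_simp; ring
    simp only [hfun]
    have ii1 : IntervalIntegrable (fun y : ℝ => -(c / α) * y ^ 1) volume 0 R :=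
      Continuous.intervalIntegrable (continuous_const.mul (continuous_pow 1)) 0 R
    have ii3 : IntervalIntegrable (fun y : ℝ => -(1 / (2 * σ ^ 2 * α)) * y ^ 3) volume 0 R :=
      Continuous.intervalIntegrable (continuous_const.mul (continuous_pow 3)) 0 R
    rw [intervalIntegral.integral_add ii1 ii3,
      intervalIntegral.integral_const_mul, intervalIntegral.integral_const_mul,
      integral_pow, integral_pow]
    have hR4 : R ^ 4 = (R ^ 2) ^ 2 := by ring
    have h2 : R ^ (1 + 1) = R ^ 2 := by norm_num
    have h4 : R ^ (3 + 1) = (R ^ 2) ^ 2 := by ring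
    rw [h2, h4, hRsq]
    field_simp
    ring
  rw [hI]
  rw [nsmul_eq_mul, smul_eq_mul]
  field_simp
  ring
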